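/- Let G be a finite simple graph and k ∈ ℕ. Every T-triangle in B_k(G) is either a cyclic T-triangle or a radial T-triangle. -/

import Mathlib

open SimpleGraph

variable {V : Type*} [Fintype V] [DecidableEq V]

/-- Delete the vertex `v` from its part: `P − v`. -/
def eraseVtx (P : Multiset (Finset V)) (v : V) : Multiset (Finset V) :=
  P.map (fun s => s.erase v)

/-- A stable `k`-partition of `G`: a multiset of exactly `k` independent sets
(empty parts allowed) that are pairwise disjoint and whose union is `V(G)`.
(Pairwise disjointness together with covering is encoded by requiring that the
multiset sum of the parts is exactly the multiset of all vertices.) -/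
def IsStablePartition (G : SimpleGraph V) (k : ℕ) (P : Multiset (Finset V)) : Prop :=
  Multiset.card P = k ∧ (P.map Finset.val).sum = (Finset.univ : Finset V).val ∧
    ∀ s ∈ P, ∀ a ∈ s, ∀ b ∈ s, ¬ G.Adj a b

/-- The Bell `k`-coloring graph of `G`. -/
def bellGraph (G : SimpleGraph V) (k : ℕ) :
    SimpleGraph {P : Multiset (Finset V) // IsStablePartition G k P} where
  Adj P Q := P ≠ Q ∧ ∃ v : V, eraseVtx P.1 v = eraseVtx Q.1 v
  symm := by
    constructor
    rintro P Q ⟨hne, v, hv⟩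
    exact ⟨hne.symm, v, hv.symm⟩
  loopless := by
    constructor
    rintro P ⟨hne, _⟩
    exact hne rfl

/-- A cyclic T-triangle: the three edges are realized by three distinct
vertices `v₁, v₂, v₃` (with `vᵢ` realizing the edge not incident to `Pᵢ`) and
`Pᵢ` contains the singleton `{vᵢ}` as a part. -/
def IsCyclicTTriple (P₁ P₂ P₃ : Multiset (Finset V)) : Prop :=
  ∃ v₁ v₂ v₃ : V, v₁ ≠ v₂ ∧ v₁ ≠ v₃ ∧ v₂ ≠ v₃ ∧
    eraseVtx P₁ v₃ = eraseVtx P₂ v₃ ∧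
    eraseVtx P₂ v₁ = eraseVtx P₃ v₁ ∧
    eraseVtx P₃ v₂ = eraseVtx P₁ v₂ ∧
    ({v₁} : Finset V) ∈ P₁ ∧ ({v₂} : Finset V) ∈ P₂ ∧ ({v₃} : Finset V) ∈ P₃

/-- A radial T-triangle (with distinguished first partition): the three edges
are realized by three distinct vertices `v₁, v₂, v₃` (with `vᵢ` realizing the
edge not incident to `Pᵢ`) and `P₁` contains `{v₁, v₂, v₃}` as a part. -/
def IsRadialTTriple (P₁ P₂ P₃ : Multiset (Finset V)) : Prop :=
  ∃ v₁ v₂ v₃ : V, v₁ ≠ v₂ ∧ v₁ ≠ v₃ ∧ v₂ ≠ v₃ ∧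
    eraseVtx P₁ v₃ = eraseVtx P₂ v₃ ∧
    eraseVtx P₂ v₁ = eraseVtx P₃ v₁ ∧
    eraseVtx P₃ v₂ = eraseVtx P₁ v₂ ∧
    ({v₁, v₂, v₃} : Finset V) ∈ P₁

/-- a "good" multiset of parts: covers each vertex exactly once. -/
def IsGood (P : Multiset (Finset V)) : Prop :=
  (P.map Finset.val).sum = (Finset.univ : Finset V).val

lemma IsGood.count_one {P : Multiset (Finset V)} (h : IsGood P) (v : V) :
    Multiset.count v (P.map Finset.val).sum = 1 := by
  rw [h]
  exact Multiset.count_eq_one_of_mem Finset.univ.nodup (Finset.mem_univ_val v)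

lemma IsGood.not_mem_erase {P : Multiset (Finset V)} (h : IsGood P)
    {s : Finset V} (hs : s ∈ P) {v : V} (hv : v ∈ s)
    {t : Finset V} (ht : t ∈ P.erase s) : v ∉ t := by
  intro hvt
  have hc := h.count_one v
  have hP : P = s ::ₘ P.erase s := (Multiset.cons_erase hs).symm
  rw [hP, Multiset.count_sum] at hc
  simp only [Multiset.map_cons, Multiset.sum_cons] at hc
  have h1 : Multiset.count v s.val = 1 :=
    Multiset.count_eq_one_of_mem s.nodup hv
  have h2 : 1 ≤ ((P.erase s).map fun b => Multiset.count v b.val).sum := by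
    have : (1 : ℕ) ≤ Multiset.count v t.val :=
      Nat.one_le_iff_ne_zero.mpr (by simpa [Multiset.count_eq_zero] using hvt)
    calc (1:ℕ) ≤ Multiset.count v t.val := this
      _ ≤ _ := Multiset.le_sum_of_mem
        (Multiset.mem_map_of_mem (fun b : Finset V => Multiset.count v b.val) ht)
  omega

lemma IsGood.part_unique {P : Multiset (Finset V)} (h : IsGood P)
    {s t : Finset V} (hs : s ∈ P) (ht : t ∈ P) {v : V} (hvs : v ∈ s) (hvt : v ∈ t) :
    s = t := by
  by_contra hne
  exact h.not_mem_erase hs hvs ((Multiset.mem_erase_of_ne (Ne.symm hne)).2 ht) hvt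

lemma IsGood.exists_part {P : Multiset (Finset V)} (h : IsGood P) (v : V) :
    ∃ s ∈ P, v ∈ s := by
  have hc := h.count_one v
  have : v ∈ (P.map Finset.val).sum := Multiset.count_pos.mp (by omega)
  obtain ⟨m, hm, hvm⟩ := Multiset.mem_join.mp (show v ∈ Multiset.join (P.map Finset.val) from this)
  obtain ⟨s, hs, rfl⟩ := Multiset.mem_map.mp hm
  exact ⟨s, hs, hvm⟩

lemma eraseVtx_eq_cons {P : Multiset (Finset V)} (h : IsGood P)
    {s : Finset V} (hs : s ∈ P) {v : V} (hv : v ∈ s) :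
    eraseVtx P v = s.erase v ::ₘ P.erase s := by
  conv_lhs => rw [eraseVtx, (Multiset.cons_erase hs).symm]
  rw [Multiset.map_cons]
  congr 1
  rw [show P.erase s = (P.erase s).map id from (Multiset.map_id _).symm,
    Multiset.map_map]
  apply Multiset.map_congr rfl
  intro t ht
  exact Finset.erase_eq_of_notMem (h.not_mem_erase hs hv ht)

/-- The part containing the moved vertex really changes. -/
lemma move_ne {P Q : Multiset (Finset V)} (hP : IsGood P) (hQ : IsGood Q)
    (hne : P ≠ Q) {v : V} (he : eraseVtx P v = eraseVtx Q v)
    {s t : Finset V} (hs : s ∈ P) (hvs : v ∈ s) (ht : t ∈ Q) (hvt : v ∈ t) :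
    s.erase v ≠ t.erase v := by
  intro heq
  apply hne
  have h1 := eraseVtx_eq_cons hP hs hvs
  have h2 := eraseVtx_eq_cons hQ ht hvt
  rw [h1, h2, heq] at he
  have hrest : P.erase s = Q.erase t := (Multiset.cons_inj_right _).mp he
  have hst : s = t := by
    rw [← Finset.insert_erase hvs, ← Finset.insert_erase hvt, heq]
  calc P = s ::ₘ P.erase s := (Multiset.cons_erase hs).symm
    _ = t ::ₘ Q.erase t := by rw [← hrest, ← hst]
    _ = Q := Multiset.cons_erase ht

/-- The old part (minus `v`) is disjoint from the new part. -/
lemma move_disjoint {P Q : Multiset (Finset V)} (hP : IsGood P) (hQ : IsGood Q)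
    (hne : P ≠ Q) {v : V} (he : eraseVtx P v = eraseVtx Q v)
    {s t : Finset V} (hs : s ∈ P) (hvs : v ∈ s) (ht : t ∈ Q) (hvt : v ∈ t)
    {w : V} (hws : w ∈ s) (hwv : w ≠ v) (hwt : w ∈ t) : False := by
  have h1 : s.erase v ∈ eraseVtx Q v := by
    rw [← he]
    exact Multiset.mem_map_of_mem _ hs
  obtain ⟨t', ht', heq⟩ := Multiset.mem_map.mp h1
  have hwt' : w ∈ t' := Finset.mem_of_mem_erase (heq ▸ Finset.mem_erase_of_ne_of_mem hwv hws : w ∈ t'.erase v)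
  have : t' = t := hQ.part_unique ht' ht hwt' hwt
  exact move_ne hP hQ hne he hs hvs ht hvt (by rw [← heq, this])

/-- Companion transfer: a vertex `u ≠ v` keeps its part (up to `v`). -/
lemma companion_eq {P Q : Multiset (Finset V)} (hP : IsGood P) (hQ : IsGood Q)
    {v : V} (he : eraseVtx P v = eraseVtx Q v) {u : V} (huv : u ≠ v)
    {s t : Finset V} (hs : s ∈ P) (hus : u ∈ s) (ht : t ∈ Q) (hut : u ∈ t) :
    s.erase v = t.erase v := by
  have h1 : s.erase v ∈ eraseVtx Q v := by
    rw [← he]; exact Multiset.mem_map_of_mem _ hs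
  obtain ⟨t', ht', heq⟩ := Multiset.mem_map.mp h1
  have hut' : u ∈ t' := Finset.mem_of_mem_erase
    (heq ▸ Finset.mem_erase_of_ne_of_mem huv hus : u ∈ t'.erase v)
  rw [← heq, hQ.part_unique ht' ht hut' hut]

/-- In a T-triangle, the part of `P₁` containing the vertex `v₃` (which
realizes the edge `P₁P₂`) is contained in `{v₁, v₂, v₃}`. -/
lemma part_subset_triple {P₁ P₂ P₃ : Multiset (Finset V)}
    (hP₁ : IsGood P₁) (hP₂ : IsGood P₂) (hP₃ : IsGood P₃)
    (hne12 : P₁ ≠ P₂) {v₁ v₂ v₃ : V}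
    (e12 : eraseVtx P₁ v₃ = eraseVtx P₂ v₃)
    (e23 : eraseVtx P₂ v₁ = eraseVtx P₃ v₁)
    (e31 : eraseVtx P₃ v₂ = eraseVtx P₁ v₂)
    (h31 : v₃ ≠ v₁) (h32 : v₃ ≠ v₂)
    {X : Finset V} (hX : X ∈ P₁) (hv₃X : v₃ ∈ X) :
    X ⊆ {v₁, v₂, v₃} := by
  intro w hw
  by_contra hwT
  simp only [Finset.mem_insert, Finset.mem_singleton, not_or] at hwT
  obtain ⟨hw1, hw2, hw3⟩ := hwT
  obtain ⟨t, ht, hwt⟩ := hP₃.exists_part w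
  have het : t.erase v₂ = X.erase v₂ := companion_eq hP₃ hP₁ e31 hw2 ht hwt hX hw
  obtain ⟨Y, hY, hwY⟩ := hP₂.exists_part w
  have heY : Y.erase v₁ = t.erase v₁ := companion_eq hP₂ hP₃ e23 hw1 hY hwY ht hwt
  have hv₃t : v₃ ∈ t := Finset.mem_of_mem_erase
    (het ▸ Finset.mem_erase_of_ne_of_mem h32 hv₃X : v₃ ∈ t.erase v₂)
  have hv₃Y : v₃ ∈ Y := Finset.mem_of_mem_erase
    (heY ▸ Finset.mem_erase_of_ne_of_mem h31 hv₃t : v₃ ∈ Y.erase v₁)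
  exact move_disjoint hP₁ hP₂ hne12 e12 hX hv₃X hY hv₃Y hw hw3 hwY

/-- The five set partitions of `Fin 3`, given as part-of functions. -/
def sigma5 : Fin 5 → Fin 3 → Finset (Fin 3) :=
  ![fun j => {j},
    ![{0}, {1, 2}, {1, 2}],
    ![{0, 2}, {1}, {0, 2}],
    ![{0, 1}, {0, 1}, {2}],
    fun _ => Finset.univ]

set_option maxRecDepth 100000 in
lemma classify3 : ∀ f : Fin 3 → Finset (Fin 3), (∀ j, j ∈ f j) →
    (∀ j x, x ∈ f j → f j = f x) → ∃ a : Fin 5, ∀ j, f j = sigma5 a j := by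
  decide

set_option maxRecDepth 100000 in
set_option synthInstance.maxHeartbeats 1000000 in
set_option synthInstance.maxSize 1000 in
lemma core3 : ∀ a b c : Fin 5,
    ((∀ j, j ≠ 2 → (sigma5 a j).erase 2 = (sigma5 b j).erase 2) ∧
      (sigma5 a 2).erase 2 ≠ (sigma5 b 2).erase 2) →
    ((∀ j, j ≠ 0 → (sigma5 b j).erase 0 = (sigma5 c j).erase 0) ∧
      (sigma5 b 0).erase 0 ≠ (sigma5 c 0).erase 0) →
    ((∀ j, j ≠ 1 → (sigma5 c j).erase 1 = (sigma5 a j).erase 1) ∧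
      (sigma5 c 1).erase 1 ≠ (sigma5 a 1).erase 1) →
    (sigma5 a 0 = {0} ∧ sigma5 b 1 = {1} ∧ sigma5 c 2 = {2}) ∨
      sigma5 a 0 = Finset.univ ∨ sigma5 b 0 = Finset.univ ∨
      sigma5 c 0 = Finset.univ := by
  decide

lemma subset_of_erase_eq {X Y T : Finset V} {v : V} (h : X.erase v = Y.erase v)
    (hY : Y ⊆ T) (hv : v ∈ T) : X ⊆ T := by
  intro x hx
  by_cases hxv : x = v
  · exact hxv ▸ hv
  · exact hY (Finset.mem_of_mem_erase
      (h ▸ Finset.mem_erase_of_ne_of_mem hxv hx : x ∈ Y.erase v))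


/-- **Every T-triangle is cyclic or radial.**  If `{P₁, P₂, P₃}` is a triangle
in `B_k(G)` with no common anchor (a T-triangle), then it is a cyclic
T-triangle or a radial T-triangle (with some labeling of the distinguished
partition). -/
theorem TTriangle_cyclic_or_radial (G : SimpleGraph V) (k : ℕ)
    (P₁ P₂ P₃ : {P : Multiset (Finset V) // IsStablePartition G k P})
    (h12 : (bellGraph G k).Adj P₁ P₂) (h23 : (bellGraph G k).Adj P₂ P₃)
    (h31 : (bellGraph G k).Adj P₃ P₁)
    (hT : ¬ ∃ u : V, eraseVtx P₁.1 u = eraseVtx P₂.1 u ∧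
        eraseVtx P₂.1 u = eraseVtx P₃.1 u ∧ eraseVtx P₃.1 u = eraseVtx P₁.1 u) :
    IsCyclicTTriple P₁.1 P₂.1 P₃.1 ∨
      IsRadialTTriple P₁.1 P₂.1 P₃.1 ∨ IsRadialTTriple P₂.1 P₃.1 P₁.1 ∨
      IsRadialTTriple P₃.1 P₁.1 P₂.1 := by
  obtain ⟨hne12, v₃, e12⟩ := h12
  obtain ⟨hne23, v₁, e23⟩ := h23
  obtain ⟨hne31, v₂, e31⟩ := h31
  -- the three realizing vertices are pairwise distinct
  have h12' : v₁ ≠ v₂ := by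
    rintro rfl; exact hT ⟨v₁, e31.symm.trans e23.symm, e23, e31⟩
  have h13 : v₁ ≠ v₃ := by
    rintro rfl; exact hT ⟨v₁, e12, e23, (e12.trans e23).symm⟩
  have h23' : v₂ ≠ v₃ := by
    rintro rfl; exact hT ⟨v₂, e12, (e31.trans e12).symm, e31⟩
  clear hT
  set Q : Fin 3 → Multiset (Finset V) := ![P₁.1, P₂.1, P₃.1] with hQdef
  have hQ : ∀ i, IsGood (Q i) := by
    intro i; fin_cases i
    exacts [P₁.2.2.1, P₂.2.2.1, P₃.2.2.1]
  set w : Fin 3 → V := ![v₁, v₂, v₃] with hwdef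
  have hw0 : w 0 = v₁ := rfl
  have hw1 : w 1 = v₂ := rfl
  have hw2 : w 2 = v₃ := rfl
  have winj : Function.Injective w := by
    intro a b hab
    fin_cases a <;> fin_cases b <;>
      simp only [hw0, hw1, hw2] at hab <;>
      first
        | rfl
        | exact absurd hab h12' | exact absurd hab h13 | exact absurd hab h23'
        | exact absurd hab.symm h12' | exact absurd hab.symm h13
        | exact absurd hab.symm h23'
  set emb : Fin 3 ↪ V := ⟨w, winj⟩ with hembdef
  have hex : ∀ i j, ∃ s, s ∈ Q i ∧ w j ∈ s := by
    intro i j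
    obtain ⟨s, h1, h2⟩ := (hQ i).exists_part (w j)
    exact ⟨s, h1, h2⟩
  choose p hpmem hpv using hex
  -- Q-level versions of the adjacency data
  have E01 : eraseVtx (Q 0) (w 2) = eraseVtx (Q 1) (w 2) := e12
  have E12 : eraseVtx (Q 1) (w 0) = eraseVtx (Q 2) (w 0) := e23
  have E20 : eraseVtx (Q 2) (w 1) = eraseVtx (Q 0) (w 1) := e31
  have N01 : Q 0 ≠ Q 1 := fun h => hne12 (Subtype.ext h)
  have N12 : Q 1 ≠ Q 2 := fun h => hne23 (Subtype.ext h)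
  have N20 : Q 2 ≠ Q 0 := fun h => hne31 (Subtype.ext h)
  -- permuted triple sets
  have T213 : ({v₂, v₁, v₃} : Finset V) = {v₁, v₂, v₃} := by
    ext x; simp only [Finset.mem_insert, Finset.mem_singleton]; tauto
  have T231 : ({v₂, v₃, v₁} : Finset V) = {v₁, v₂, v₃} := by
    ext x; simp only [Finset.mem_insert, Finset.mem_singleton]; tauto
  have T321 : ({v₃, v₂, v₁} : Finset V) = {v₁, v₂, v₃} := by
    ext x; simp only [Finset.mem_insert, Finset.mem_singleton]; tauto
  have T312 : ({v₃, v₁, v₂} : Finset V) = {v₁, v₂, v₃} := by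
    ext x; simp only [Finset.mem_insert, Finset.mem_singleton]; tauto
  have T132 : ({v₁, v₃, v₂} : Finset V) = {v₁, v₂, v₃} := by
    ext x; simp only [Finset.mem_insert, Finset.mem_singleton]; tauto
  -- the six "moving" parts are contained in the triple
  have hs02 : p 0 2 ⊆ {v₁, v₂, v₃} :=
    part_subset_triple (hQ 0) (hQ 1) (hQ 2) N01 E01 E12 E20
      (winj.ne (by decide)) (winj.ne (by decide)) (hpmem 0 2) (hpv 0 2)
  have hs12 : p 1 2 ⊆ {v₁, v₂, v₃} := T213 ▸
    part_subset_triple (hQ 1) (hQ 0) (hQ 2) N01.symm E01.symm E20.symm E12.symm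
      (winj.ne (by decide)) (winj.ne (by decide)) (hpmem 1 2) (hpv 1 2)
  have hs10 : p 1 0 ⊆ {v₁, v₂, v₃} := T231 ▸
    part_subset_triple (hQ 1) (hQ 2) (hQ 0) N12 E12 E20 E01
      (winj.ne (by decide)) (winj.ne (by decide)) (hpmem 1 0) (hpv 1 0)
  have hs20 : p 2 0 ⊆ {v₁, v₂, v₃} := T321 ▸
    part_subset_triple (hQ 2) (hQ 1) (hQ 0) N12.symm E12.symm E01.symm E20.symm
      (winj.ne (by decide)) (winj.ne (by decide)) (hpmem 2 0) (hpv 2 0)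
  have hs21 : p 2 1 ⊆ {v₁, v₂, v₃} := T312 ▸
    part_subset_triple (hQ 2) (hQ 0) (hQ 1) N20 E20 E01 E12
      (winj.ne (by decide)) (winj.ne (by decide)) (hpmem 2 1) (hpv 2 1)
  have hs01 : p 0 1 ⊆ {v₁, v₂, v₃} := T132 ▸
    part_subset_triple (hQ 0) (hQ 2) (hQ 1) N20.symm E20.symm E12.symm E01.symm
      (winj.ne (by decide)) (winj.ne (by decide)) (hpmem 0 1) (hpv 0 1)
  -- the three "stationary" parts
  have hvT1 : v₁ ∈ ({v₁, v₂, v₃} : Finset V) := by simp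
  have hvT3 : v₃ ∈ ({v₁, v₂, v₃} : Finset V) := by simp
  have hs00 : p 0 0 ⊆ {v₁, v₂, v₃} :=
    subset_of_erase_eq
      (companion_eq (hQ 0) (hQ 1) E01 (winj.ne (by decide))
        (hpmem 0 0) (hpv 0 0) (hpmem 1 0) (hpv 1 0)) hs10 hvT3
  have hs11 : p 1 1 ⊆ {v₁, v₂, v₃} :=
    subset_of_erase_eq
      (companion_eq (hQ 0) (hQ 1) E01 (winj.ne (by decide))
        (hpmem 0 1) (hpv 0 1) (hpmem 1 1) (hpv 1 1)).symm hs01 hvT3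
  have hs22 : p 2 2 ⊆ {v₁, v₂, v₃} :=
    subset_of_erase_eq
      (companion_eq (hQ 1) (hQ 2) E12 (winj.ne (by decide))
        (hpmem 1 2) (hpv 1 2) (hpmem 2 2) (hpv 2 2)).symm hs12 hvT1
  have hsub : ∀ i j, p i j ⊆ {v₁, v₂, v₃} := by
    intro i j; fin_cases i <;> fin_cases j
    exacts [hs00, hs01, hs02, hs10, hs11, hs12, hs20, hs21, hs22]
  -- transfer to `Fin 3`
  set F : Fin 3 → Fin 3 → Finset (Fin 3) :=
    fun i j => Finset.filter (fun x => w x ∈ p i j) Finset.univ with hFdef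
  have hmap : ∀ i j, (F i j).map emb = p i j := by
    intro i j
    ext y
    simp only [hFdef, Finset.mem_map, Finset.mem_filter, Finset.mem_univ, true_and]
    constructor
    · rintro ⟨x, hx, rfl⟩; exact hx
    · intro hy
      have := hsub i j hy
      simp only [Finset.mem_insert, Finset.mem_singleton] at this
      rcases this with rfl | rfl | rfl
      exacts [⟨0, hy, rfl⟩, ⟨1, hy, rfl⟩, ⟨2, hy, rfl⟩]
  have hclass : ∀ i, ∃ a : Fin 5, ∀ j, F i j = sigma5 a j := by
    intro i
    apply classify3
    · intro j
      simp only [hFdef, Finset.mem_filter, Finset.mem_univ, true_and]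
      exact hpv i j
    · intro j x hx
      simp only [hFdef, Finset.mem_filter, Finset.mem_univ, true_and] at hx
      have hpe : p i j = p i x :=
        (hQ i).part_unique (hpmem i j) (hpmem i x) hx (hpv i x)
      simp only [hFdef, hpe]
  obtain ⟨a, ha⟩ := hclass 0
  obtain ⟨b, hb⟩ := hclass 1
  obtain ⟨c, hc⟩ := hclass 2
  have htrans : ∀ i i' j e, ((F i j).erase e = (F i' j).erase e) ↔
      ((p i j).erase (w e) = (p i' j).erase (w e)) := by
    intro i i' j e
    constructor
    · intro h
      have h' := congrArg (Finset.map emb) h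
      rw [Finset.map_erase, Finset.map_erase, hmap, hmap] at h'
      exact h'
    · intro h
      apply Finset.map_injective emb
      rw [Finset.map_erase, Finset.map_erase, hmap, hmap]
      exact h
  have C12 : (∀ j, j ≠ 2 → (sigma5 a j).erase 2 = (sigma5 b j).erase 2) ∧
      (sigma5 a 2).erase 2 ≠ (sigma5 b 2).erase 2 := by
    constructor
    · intro j hj
      rw [← ha j, ← hb j]
      exact (htrans 0 1 j 2).mpr
        (companion_eq (hQ 0) (hQ 1) E01 (winj.ne hj)
          (hpmem 0 j) (hpv 0 j) (hpmem 1 j) (hpv 1 j))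
    · rw [← ha 2, ← hb 2]
      intro hcon
      exact move_ne (hQ 0) (hQ 1) N01 E01 (hpmem 0 2) (hpv 0 2)
        (hpmem 1 2) (hpv 1 2) ((htrans 0 1 2 2).mp hcon)
  have C23 : (∀ j, j ≠ 0 → (sigma5 b j).erase 0 = (sigma5 c j).erase 0) ∧
      (sigma5 b 0).erase 0 ≠ (sigma5 c 0).erase 0 := by
    constructor
    · intro j hj
      rw [← hb j, ← hc j]
      exact (htrans 1 2 j 0).mpr
        (companion_eq (hQ 1) (hQ 2) E12 (winj.ne hj)
          (hpmem 1 j) (hpv 1 j) (hpmem 2 j) (hpv 2 j))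
    · rw [← hb 0, ← hc 0]
      intro hcon
      exact move_ne (hQ 1) (hQ 2) N12 E12 (hpmem 1 0) (hpv 1 0)
        (hpmem 2 0) (hpv 2 0) ((htrans 1 2 0 0).mp hcon)
  have C31 : (∀ j, j ≠ 1 → (sigma5 c j).erase 1 = (sigma5 a j).erase 1) ∧
      (sigma5 c 1).erase 1 ≠ (sigma5 a 1).erase 1 := by
    constructor
    · intro j hj
      rw [← hc j, ← ha j]
      exact (htrans 2 0 j 1).mpr
        (companion_eq (hQ 2) (hQ 0) E20 (winj.ne hj)
          (hpmem 2 j) (hpv 2 j) (hpmem 0 j) (hpv 0 j))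
    · rw [← hc 1, ← ha 1]
      intro hcon
      exact move_ne (hQ 2) (hQ 0) N20 E20 (hpmem 2 1) (hpv 2 1)
        (hpmem 0 1) (hpv 0 1) ((htrans 2 0 1 1).mp hcon)
  have huniv : (Finset.univ : Finset (Fin 3)).map emb = {v₁, v₂, v₃} := by
    ext y
    simp only [Finset.mem_map, Finset.mem_univ, true_and, Finset.mem_insert,
      Finset.mem_singleton]
    constructor
    · rintro ⟨x, rfl⟩
      fin_cases x
      · left; rfl
      · right; left; rfl
      · right; right; rfl
    · rintro (rfl | rfl | rfl)
      exacts [⟨0, rfl⟩, ⟨1, rfl⟩, ⟨2, rfl⟩]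
  rcases core3 a b c C12 C23 C31 with ⟨ha0, hb1, hc2⟩ | ha0 | hb0 | hc0
  · -- cyclic
    left
    have m1 : ({v₁} : Finset V) ∈ P₁.1 := by
      have : p 0 0 = {v₁} := by
        rw [← hmap 0 0, ha 0, ha0, Finset.map_singleton]; rfl
      exact this ▸ hpmem 0 0
    have m2 : ({v₂} : Finset V) ∈ P₂.1 := by
      have : p 1 1 = {v₂} := by
        rw [← hmap 1 1, hb 1, hb1, Finset.map_singleton]; rfl
      exact this ▸ hpmem 1 1
    have m3 : ({v₃} : Finset V) ∈ P₃.1 := by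
      have : p 2 2 = {v₃} := by
        rw [← hmap 2 2, hc 2, hc2, Finset.map_singleton]; rfl
      exact this ▸ hpmem 2 2
    exact ⟨v₁, v₂, v₃, h12', h13, h23', e12, e23, e31, m1, m2, m3⟩
  · -- radial at P₁
    right; left
    have m : ({v₁, v₂, v₃} : Finset V) ∈ P₁.1 := by
      have : p 0 0 = {v₁, v₂, v₃} := by rw [← hmap 0 0, ha 0, ha0, huniv]
      exact this ▸ hpmem 0 0
    exact ⟨v₁, v₂, v₃, h12', h13, h23', e12, e23, e31, m⟩
  · -- radial at P₂
    right; right; left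
    have m : ({v₂, v₃, v₁} : Finset V) ∈ P₂.1 := by
      have : p 1 0 = {v₂, v₃, v₁} := by rw [← hmap 1 0, hb 0, hb0, huniv, T231]
      exact this ▸ hpmem 1 0
    exact ⟨v₂, v₃, v₁, h23', h12'.symm, h13.symm, e23, e31, e12, m⟩
  · -- radial at P₃
    right; right; right
    have m : ({v₃, v₁, v₂} : Finset V) ∈ P₃.1 := by
      have : p 2 0 = {v₃, v₁, v₂} := by rw [← hmap 2 0, hc 0, hc0, huniv, T312]
      exact this ▸ hpmem 2 0
    exact ⟨v₃, v₁, v₂, h13.symm, h23'.symm, h12', e31, e12, e23, m⟩
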